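/- Let G be a simple graph on a vertex type α, let H be a simple graph on a vertex type β, and let f : α → β be a map such that whenever x and y are adjacent in G, either f x = f y or f x is adjacent to f y in H. Assume: (i) H is connected; (ii) for every vertex v of β, the fiber f⁻¹(v) is nonempty and the subgraph of G induced on f⁻¹(v) is connected; (iii) for every pair of adjacent vertices u, v of H and every x ∈ f⁻¹(u), there exists y ∈ f⁻¹(v) with x adjacent to y in G. Then G is connected. -/
import Mathlib


private lemma fiber_reach {α β : Type*} (G : SimpleGraph α) (f : α → β)
    (hfib : ∀ v : β, (f ⁻¹' {v}).Nonempty ∧ (G.induce (f ⁻¹' {v})).Connected)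
    {x y : α} (h : f x = f y) : G.Reachable x y := by
  have hx : x ∈ f ⁻¹' {f y} := h
  have hy : y ∈ f ⁻¹' {f y} := rfl
  have := ((hfib (f y)).2).preconnected ⟨x, hx⟩ ⟨y, hy⟩
  simpa using this.map (SimpleGraph.Embedding.induce (f ⁻¹' {f y})).toHom

/-- Connectedness criterion for a graph map `f : α → β` carrying a simple graph `G`
onto a simple graph `H`: if `H` is connected, every fiber of `f` is nonempty with
connected induced subgraph, and every edge of `H` can be lifted starting at any
point of the fiber over its initial vertex, then `G` is connected. -/
theorem connected_of_map_fibers {α β : Type*} (G : SimpleGraph α) (H : SimpleGraph β)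
    (f : α → β)
    (hmap : ∀ x y : α, G.Adj x y → f x = f y ∨ H.Adj (f x) (f y))
    (hH : H.Connected)
    (hfib : ∀ v : β, (f ⁻¹' {v}).Nonempty ∧ (G.induce (f ⁻¹' {v})).Connected)
    (hlift : ∀ u v : β, H.Adj u v → ∀ x ∈ f ⁻¹' {u}, ∃ y ∈ f ⁻¹' {v}, G.Adj x y) :
    G.Connected := by
  have key : ∀ {u v : β} (w : H.Walk u v) (x y : α), f x = u → f y = v →
      G.Reachable x y := by
    intro u v w
    induction w with
    | nil =>
      intro x y hx hy
      exact fiber_reach G f hfib (hx.trans hy.symm)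
    | cons h p ih =>
      intro x y hx hy
      obtain ⟨z, hz, hxz⟩ := hlift _ _ h x hx
      exact hxz.reachable.trans (ih z y hz hy)
  have hne : Nonempty α := by
    obtain ⟨b⟩ := hH.nonempty
    exact ⟨(hfib b).1.choose⟩
  refine ⟨fun x y => ?_⟩
  obtain ⟨w⟩ := hH.preconnected (f x) (f y)
  exact key w x y rfl rfl
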